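/- The sparsemax threshold function satisfies ∑_{μ=1}^M [z_μ − τ(z)]_+ = 1 for all z ∈ ℝ^M, where τ(z) = ((∑_{ν ≤ κ(z)} z_(ν)) − 1)/κ(z), κ(z) = max{k ∈ [M] : 1 + k z_(k) > ∑_{ν ≤ k} z_(ν)}, and z_(1) ≥ z_(2) ≥ ... ≥ z_(M) is the descending rearrangement of z. -/

import Mathlib

open scoped BigOperators

/-- the sparsemax threshold function `τ` satisfies
`∑_{μ=1}^M [z_μ − τ(z)]_+ = 1`.  Here `w` is the descending rearrangement of `z`
(`w i` is the `(i+1)`-th largest entry, 0-indexed), `κ` is the largest index `k`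
(0-indexed, representing support size `κ+1`) with `1 + (k+1)·w k > ∑_{ν ≤ k} w ν`,
and `τ = ((∑_{ν ≤ κ} w ν) − 1)/(κ+1)`. -/
theorem sparsemax_threshold_sums_to_one (M : ℕ) (z : Fin M → ℝ)
    (σ : Equiv.Perm (Fin M)) (w : Fin M → ℝ) (hw : w = z ∘ σ) (hsort : Antitone w)
    (κ : Fin M)
    (hκ : (∑ i ∈ Finset.Iic κ, w i) < 1 + ((κ : ℕ) + 1) * w κ)
    (hκmax : ∀ k : Fin M, (∑ i ∈ Finset.Iic k, w i) < 1 + ((k : ℕ) + 1) * w k → k ≤ κ)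
    (τ : ℝ) (hτ : τ = ((∑ i ∈ Finset.Iic κ, w i) - 1) / ((κ : ℕ) + 1)) :
    ∑ μ, max 0 (z μ - τ) = 1 := by
  have hpos : (0:ℝ) < (κ : ℕ) + 1 := by positivity
  set S := ∑ i ∈ Finset.Iic κ, w i with hS
  -- τ < w κ
  have hτlt : τ < w κ := by
    rw [hτ, div_lt_iff₀ hpos]
    linarith
  -- w i ≤ τ for i > κ
  have hle : ∀ i : Fin M, κ < i → w i ≤ τ := by
    intro i hi
    have hlt : (κ : ℕ) + 1 < M := lt_of_le_of_lt (Nat.succ_le_of_lt hi) i.isLt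
    set j : Fin M := ⟨(κ : ℕ) + 1, hlt⟩ with hj
    have hji : j ≤ i := by
      rw [Fin.le_def]; exact Nat.succ_le_of_lt hi
    have hwij : w i ≤ w j := hsort hji
    have hfail : ¬ ((∑ i ∈ Finset.Iic j, w i) < 1 + ((j : ℕ) + 1) * w j) := by
      intro h
      have := hκmax j h
      rw [Fin.le_def] at this
      simp [hj] at this
    have hIic : Finset.Iic j = insert j (Finset.Iic κ) := by
      ext a
      simp only [Finset.mem_Iic, Finset.mem_insert, Fin.le_def, Fin.ext_iff, hj]
      omega
    have hsum : (∑ i ∈ Finset.Iic j, w i) = w j + S := by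
      rw [hIic, Finset.sum_insert]
      simp [Finset.mem_Iic, Fin.le_def, hj]
    push_neg at hfail
    rw [hsum] at hfail
    have hjval : ((j : ℕ) : ℝ) = (κ : ℕ) + 1 := by simp [hj]
    rw [hjval] at hfail
    have hwjτ : w j ≤ τ := by
      rw [hτ, le_div_iff₀ hpos]
      nlinarith
    linarith [hwij, hwjτ]
  -- rewrite sum via σ
  have hperm : ∑ μ, max 0 (z μ - τ) = ∑ i, max 0 (w i - τ) := by
    rw [hw]
    exact (Equiv.sum_comp σ (fun μ => max 0 (z μ - τ))).symm
  rw [hperm]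
  rw [← Finset.sum_add_sum_compl (Finset.Iic κ)]
  have h1 : ∑ i ∈ Finset.Iic κ, max 0 (w i - τ) = 1 := by
    have : ∀ i ∈ Finset.Iic κ, max 0 (w i - τ) = w i - τ := by
      intro i hi
      rw [Finset.mem_Iic] at hi
      have : w κ ≤ w i := hsort hi
      rw [max_eq_right]; linarith
    rw [Finset.sum_congr rfl this, Finset.sum_sub_distrib]
    have hcard : (Finset.Iic κ).card = (κ : ℕ) + 1 := by
      exact Fin.card_Iic κ
    rw [Finset.sum_const, hcard, hτ]
    rw [nsmul_eq_mul, ← hS]; push_cast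
    field_simp
    ring
  have h2 : ∑ i ∈ (Finset.Iic κ)ᶜ, max 0 (w i - τ) = 0 := by
    apply Finset.sum_eq_zero
    intro i hi
    rw [Finset.mem_compl, Finset.mem_Iic, not_le] at hi
    have := hle i hi
    rw [max_eq_left]; linarith
  rw [h1, h2, add_zero]
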